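/- For every outer face complex A (a presheaf on the wide subcategory Δ_inert of inert maps in Δ), the simplicial set X = j_!A obtained as the left Kan extension of A along (the opposite of) the inclusion j : Δ_inert → Δ is a decomposition space. (Explicitly, X has X_k ≅ Σ_{ℓ_1,…,ℓ_k ∈ ℕ} A_{ℓ_1+⋯+ℓ_k}, with inner face d_i adding ℓ_i and ℓ_{i+1}, outer faces d_0(a, ℓ_1,…,ℓ_k) = (d_⊥^{ℓ_1}a, ℓ_2,…,ℓ_k) and d_k(a, ℓ_1,…,ℓ_k) = (d_⊤^{ℓ_k}a, ℓ_1,…,ℓ_{k-1}), and degeneracies inserting 0 into the list.) -/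

import Mathlib

open CategoryTheory Simplicial

universe u

/-- A morphism in the simplex category is *active* if it preserves endpoints. -/
def IsActive {n m : SimplexCategory} (α : n ⟶ m) : Prop :=
  α.toOrderHom 0 = 0 ∧ α.toOrderHom (Fin.last n.len) = Fin.last m.len

/-- A morphism in the simplex category is *inert* if it is distance preserving. -/
def IsInert {n m : SimplexCategory} (α : n ⟶ m) : Prop :=
  ∀ i : Fin n.len, (α.toOrderHom i.succ : ℕ) = (α.toOrderHom i.castSucc : ℕ) + 1

/-- A commuting square of sets (top `f`, left `g`, right `h`, bottom `k`) is a pullback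
if the canonical map to the fiber product is a bijection. -/
def IsPullbackSet {A B C D : Type u} (f : A → B) (g : A → C) (h : B → D) (k : C → D) : Prop :=
  (∀ a, h (f a) = k (g a)) ∧ ∀ (b : B) (c : C), h b = k c → ∃! a : A, f a = b ∧ g a = c

/-- A simplicial set is a decomposition space if it sends every active-inert pushout square
in the simplex category to a pullback square of sets. -/
def IsDecomposition (X : SSet.{u}) : Prop :=
  ∀ ⦃n m k p : SimplexCategory⦄ (α : n ⟶ m) (ι : n ⟶ k) (θ : m ⟶ p) (φ : k ⟶ p),
    IsActive α → IsInert ι → IsInert θ → IsActive φ → IsPushout α ι θ φ →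
    IsPullbackSet (fun x => X.map φ.op x) (fun x => X.map θ.op x)
      (fun x => X.map ι.op x) (fun x => X.map α.op x)

/-- The morphism property of being inert. -/
def inertProp : MorphismProperty SimplexCategory := fun _ _ f => IsInert f

lemma inert_apply_succ {m k : SimplexCategory} (g : m ⟶ k) (hg : IsInert g)
    {a b : Fin (m.len + 1)} (hab : (a : ℕ) = (b : ℕ) + 1) :
    (g.toOrderHom a : ℕ) = (g.toOrderHom b : ℕ) + 1 := by
  have hb : (b : ℕ) < m.len := by omega
  obtain ⟨c, rfl⟩ : ∃ c : Fin m.len, b = c.castSucc :=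
    ⟨⟨(b : ℕ), hb⟩, Fin.ext (by simp)⟩
  obtain rfl : a = c.succ := Fin.ext (by simpa using hab)
  exact hg c

instance : inertProp.IsMultiplicative where
  id_mem n := by
    intro i
    simp [SimplexCategory.id_toOrderHom]
  comp_mem f g hf hg := by
    intro i
    rw [SimplexCategory.comp_toOrderHom]
    exact inert_apply_succ g hg (hf i)

/-- The wide subcategory `Δ_inert` of the simplex category on the inert morphisms. -/
def DeltaInert := WideSubcategory inertProp

instance : Category DeltaInert :=
  inferInstanceAs (Category (WideSubcategory inertProp))

/-- The inclusion functor `j : Δ_inert → Δ`. -/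
def inertInclusion : DeltaInert ⥤ SimplexCategory := wideSubcategoryInclusion inertProp

namespace FreeDecomp

open SimplexCategory

/-- evaluation of a composite -/
lemma comp_app {n m k : SimplexCategory} (f : n ⟶ m) (g : m ⟶ k) (i : Fin (n.len + 1)) :
    (f ≫ g).toOrderHom i = g.toOrderHom (f.toOrderHom i) := by
  rw [SimplexCategory.comp_toOrderHom]; rfl

lemma hom_ext' {n m : SimplexCategory} {f g : n ⟶ m}
    (h : ∀ i, (f.toOrderHom i : ℕ) = (g.toOrderHom i : ℕ)) : f = g :=
  SimplexCategory.Hom.ext _ _ (OrderHom.ext _ _ (funext fun i => Fin.ext (h i)))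

lemma isActive_id (n : SimplexCategory) : IsActive (𝟙 n) := by
  constructor <;> simp [SimplexCategory.id_toOrderHom]

lemma isActive_comp {n m k : SimplexCategory} {f : n ⟶ m} {g : m ⟶ k}
    (hf : IsActive f) (hg : IsActive g) : IsActive (f ≫ g) := by
  constructor
  · rw [comp_app, hf.1, hg.1]
  · rw [comp_app, hf.2, hg.2]

lemma inert_shift {n m : SimplexCategory} {g : n ⟶ m} (hg : IsInert g)
    (i : Fin (n.len + 1)) :
    (g.toOrderHom i : ℕ) = (g.toOrderHom 0 : ℕ) + (i : ℕ) := by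
  induction i using Fin.induction with
  | zero => simp
  | succ i ih =>
      have := hg i
      rw [this, ih]
      simp [Fin.val_succ]
      omega

section Fact

variable {n m : SimplexCategory} (f : n ⟶ m)

lemma f_zero_le (i : Fin (n.len + 1)) :
    (f.toOrderHom 0 : ℕ) ≤ (f.toOrderHom i : ℕ) :=
  f.toOrderHom.monotone (Fin.zero_le i)

lemma f_le_last (i : Fin (n.len + 1)) :
    (f.toOrderHom i : ℕ) ≤ (f.toOrderHom (Fin.last n.len) : ℕ) :=
  f.toOrderHom.monotone (Fin.le_last i)

/-- codomain of the active part -/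
def acod : SimplexCategory :=
  SimplexCategory.mk ((f.toOrderHom (Fin.last n.len) : ℕ) - (f.toOrderHom 0 : ℕ))

/-- the active part -/
def amap : n ⟶ acod f :=
  SimplexCategory.Hom.mk
    ⟨fun i => ⟨(f.toOrderHom i : ℕ) - (f.toOrderHom 0 : ℕ), by
        have h1 := f_le_last f i
        simp only [acod, len_mk]
        omega⟩,
      fun i j hij => by
        simp only [Fin.mk_le_mk]
        have := f.toOrderHom.monotone hij
        omega⟩

/-- the inert part -/
def imap : acod f ⟶ m :=
  SimplexCategory.Hom.mk
    ⟨fun j => ⟨(j : ℕ) + (f.toOrderHom 0 : ℕ), by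
        have hj : (j : ℕ) ≤ (f.toOrderHom (Fin.last n.len) : ℕ) - (f.toOrderHom 0 : ℕ) := by
          have := j.isLt
          simp only [acod, len_mk] at this
          omega
        have h0 := f_zero_le f (Fin.last n.len)
        have h2 : (f.toOrderHom (Fin.last n.len) : ℕ) ≤ m.len :=
          Nat.lt_succ_iff.mp (f.toOrderHom (Fin.last n.len)).isLt
        omega⟩,
      fun i j hij => by
        simp only [Fin.mk_le_mk]
        have : (i : ℕ) ≤ (j : ℕ) := hij
        omega⟩

@[simp] lemma amap_val (i : Fin (n.len + 1)) :
    ((amap f).toOrderHom i : ℕ) = (f.toOrderHom i : ℕ) - (f.toOrderHom 0 : ℕ) := rfl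

@[simp] lemma imap_val (j : Fin ((acod f).len + 1)) :
    ((imap f).toOrderHom j : ℕ) = (j : ℕ) + (f.toOrderHom 0 : ℕ) := rfl

lemma amap_active : IsActive (amap f) := by
  constructor
  · apply Fin.ext
    simp
  · apply Fin.ext
    rw [amap_val]
    simp [acod, Fin.last]

lemma imap_inert : IsInert (imap f) := by
  intro i
  simp [Fin.val_succ]
  omega

lemma fact : amap f ≫ imap f = f := by
  apply hom_ext'
  intro i
  rw [comp_app]
  have := f_zero_le f i
  simp
  omega

end Fact

/-- uniqueness of the active-inert factorization, numerical version -/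
lemma fact_unique_cod {n m q : SimplexCategory} {f : n ⟶ m} {e : n ⟶ q} {g : q ⟶ m}
    (he : IsActive e) (hg : IsInert g) (hfg : e ≫ g = f) : acod f = q := by
  apply SimplexCategory.ext
  have h0 : f.toOrderHom 0 = g.toOrderHom (e.toOrderHom 0) := by rw [← hfg, comp_app]
  have hl : f.toOrderHom (Fin.last n.len) = g.toOrderHom (e.toOrderHom (Fin.last n.len)) := by
    rw [← hfg, comp_app]
  rw [he.1] at h0
  rw [he.2] at hl
  have hs := inert_shift hg (Fin.last q.len)
  simp only [acod, len_mk]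
  have h0' : (f.toOrderHom 0 : ℕ) = (g.toOrderHom 0 : ℕ) := by rw [h0]
  have hl' : (f.toOrderHom (Fin.last n.len) : ℕ) = (g.toOrderHom (Fin.last q.len) : ℕ) := by
    rw [hl]
  rw [h0', hl', hs]
  simp [Fin.last]


section Model

variable (A : DeltaInertᵒᵖ ⥤ Type u)

/-- object of `Δ_inert` attached to an object of `Δ` -/
def DI (q : SimplexCategory) : DeltaInert := WideSubcategory.mk q

def DIop (q : SimplexCategory) : DeltaInertᵒᵖ := Opposite.op (DI q)

/-- morphism of `Δ_inert` attached to an inert morphism -/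
def DIhom {a b : SimplexCategory} (g : a ⟶ b) (hg : IsInert g) : DI a ⟶ DI b :=
  ⟨g, hg⟩

/-- contravariant action of an inert morphism on `A` -/
def Amap {a b : SimplexCategory} (g : a ⟶ b) (hg : IsInert g) :
    A.obj (DIop b) → A.obj (DIop a) :=
  A.map (DIhom g hg).op

lemma Amap_id {a : SimplexCategory} (h : IsInert (𝟙 a)) (x : A.obj (DIop a)) :
    Amap A (𝟙 a) h x = x := by
  have h1 : DIhom (𝟙 a) h = 𝟙 (DI a) := WideSubcategory.hom_ext _ rfl
  have h2 : (DIhom (𝟙 a) h).op = 𝟙 (DIop a) := by rw [h1]; rfl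
  show A.map (DIhom (𝟙 a) h).op x = x
  rw [h2]
  exact FunctorToTypes.map_id_apply A x

lemma Amap_comp {a b c : SimplexCategory} (g : a ⟶ b) (hg : IsInert g)
    (g' : b ⟶ c) (hg' : IsInert g') (hgg : IsInert (g ≫ g')) (x : A.obj (DIop c)) :
    Amap A (g ≫ g') hgg x = Amap A g hg (Amap A g' hg' x) := by
  have : DIhom (g ≫ g') hgg = DIhom g hg ≫ DIhom g' hg' := WideSubcategory.hom_ext _ rfl
  simp [Amap, this]
  rfl

lemma Amap_congr {a b : SimplexCategory} {g g' : a ⟶ b} {hg : IsInert g} {hg' : IsInert g'}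
    (h : g = g') (x : A.obj (DIop b)) : Amap A g hg x = Amap A g' hg' x := by
  subst h; rfl

/-- the explicit model for the left Kan extension at `n` -/
def Xobj (n : SimplexCategory) : Type u :=
  Σ' (q : SimplexCategory) (α : n ⟶ q) (_ : IsActive α), A.obj (DIop q)

/-- the action of an arbitrary simplex map on `Xobj` -/
def Xmap {n n' : SimplexCategory} (β : n' ⟶ n) (x : Xobj A n) : Xobj A n' :=
  ⟨FreeDecomp.acod (β ≫ x.2.1), FreeDecomp.amap (β ≫ x.2.1), amap_active _,
    Amap A (FreeDecomp.imap (β ≫ x.2.1)) (imap_inert _) x.2.2.2⟩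

lemma Xobj_mk_congr {n q : SimplexCategory} {α α' : n ⟶ q} {h : IsActive α}
    {h' : IsActive α'} {a a' : A.obj (DIop q)} (e1 : α = α') (e2 : a = a') :
    (⟨q, α, h, a⟩ : Xobj A n) = ⟨q, α', h', a'⟩ := by
  subst e1; subst e2; rfl

lemma Xobj_mk_fst {n q q' : SimplexCategory} {α : n ⟶ q} {α' : n ⟶ q'} {h h'} {a a'}
    (H : (⟨q, α, h, a⟩ : Xobj A n) = ⟨q', α', h', a'⟩) : q = q' :=
  congrArg PSigma.fst H

lemma Xobj_mk_inj {n q : SimplexCategory} {α α' : n ⟶ q} {h : IsActive α}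
    {h' : IsActive α'} {a a' : A.obj (DIop q)}
    (H : (⟨q, α, h, a⟩ : Xobj A n) = ⟨q, α', h', a'⟩) : α = α' ∧ a = a' := by
  obtain ⟨-, H2⟩ := PSigma.mk.inj H
  obtain ⟨h1, H3⟩ := PSigma.mk.inj (eq_of_heq H2)
  subst h1
  exact ⟨rfl, eq_of_heq (PSigma.mk.inj (eq_of_heq H3)).2⟩

/-- the workhorse: compute `Xmap` from any active-inert factorization -/
lemma Xmap_eq {n n' : SimplexCategory} (β : n' ⟶ n) {q : SimplexCategory} (α : n ⟶ q)
    (hα : IsActive α) (a : A.obj (DIop q)) {q' : SimplexCategory} (e : n' ⟶ q')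
    (g : q' ⟶ q) (he : IsActive e) (hg : IsInert g) (hfg : e ≫ g = β ≫ α) :
    Xmap A β ⟨q, α, hα, a⟩ = ⟨q', e, he, Amap A g hg a⟩ := by
  have hq : acod (β ≫ α) = q' := fact_unique_cod he hg hfg
  subst hq
  have happ : ∀ i, (g.toOrderHom (e.toOrderHom i) : ℕ) = ((β ≫ α).toOrderHom i : ℕ) := by
    intro i
    have h := congrArg (fun f : n' ⟶ q => ((SimplexCategory.Hom.toOrderHom f) i : ℕ)) hfg
    simpa [comp_app] using h
  have h0 : ((β ≫ α).toOrderHom 0 : ℕ) = (g.toOrderHom 0 : ℕ) := by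
    rw [← happ 0, he.1]
  have hval : ∀ i, ((β ≫ α).toOrderHom i : ℕ) =
      (g.toOrderHom 0 : ℕ) + (e.toOrderHom i : ℕ) := by
    intro i
    rw [← happ i, inert_shift hg]
  have he' : amap (β ≫ α) = e := by
    apply hom_ext'
    intro i
    rw [amap_val, hval i, h0]
    omega
  have hg' : imap (β ≫ α) = g := by
    apply hom_ext'
    intro j
    rw [imap_val, h0, inert_shift hg j]
    omega
  exact Xobj_mk_congr A he' (Amap_congr A hg' a)

lemma Xmap_id {n : SimplexCategory} (x : Xobj A n) : Xmap A (𝟙 n) x = x := by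
  obtain ⟨q, α, hα, a⟩ := x
  rw [Xmap_eq A (𝟙 n) α hα a α (𝟙 q) hα (inertProp.id_mem q) (by simp)]
  exact Xobj_mk_congr A rfl (Amap_id A _ a)

lemma Xmap_comp {n n' n'' : SimplexCategory} (β : n' ⟶ n) (β' : n'' ⟶ n') (x : Xobj A n) :
    Xmap A (β' ≫ β) x = Xmap A β' (Xmap A β x) := by
  obtain ⟨q, α, hα, a⟩ := x
  have h1 : Xmap A β (⟨q, α, hα, a⟩ : Xobj A n) =
      ⟨acod (β ≫ α), amap (β ≫ α), amap_active _, Amap A (imap (β ≫ α)) (imap_inert _) a⟩ := rfl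
  rw [h1]
  set f := β ≫ α with hf
  set f' := β' ≫ amap f with hf'
  have hcomp : amap f' ≫ (imap f' ≫ imap f) = (β' ≫ β) ≫ α := by
    rw [← Category.assoc, fact, hf', Category.assoc, fact, hf, Category.assoc]
  have hin : IsInert (imap f' ≫ imap f) :=
    inertProp.comp_mem _ _ (imap_inert f') (imap_inert f)
  rw [Xmap_eq A (β' ≫ β) α hα a (amap f') (imap f' ≫ imap f) (amap_active f') hin hcomp]
  rw [Xmap_eq A β' (amap f) (amap_active f) (Amap A (imap f) (imap_inert f) a)
    (amap f') (imap f') (amap_active f') (imap_inert f') (fact f')]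
  exact Xobj_mk_congr A rfl (Amap_comp A _ _ _ _ _ a)

/-- the explicit model as a simplicial set -/
def XF : SSet.{u} where
  obj n := Xobj A n.unop
  map β := TypeCat.ofHom fun x => Xmap A β.unop x
  map_id n := by ext x; exact Xmap_id A x
  map_comp {n n' n''} β β' := by ext x; exact Xmap_comp A β.unop β'.unop x

/-- the unit of the Kan extension -/
def XFunit : A ⟶ inertInclusion.op ⋙ XF A where
  app ℓ := TypeCat.ofHom fun a => (⟨ℓ.unop.obj, 𝟙 ℓ.unop.obj, isActive_id _, a⟩ : Xobj A ℓ.unop.obj)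
  naturality ℓ ℓ' h := by
    ext a
    have key : Xmap A (h.unop.1) ⟨ℓ.unop.obj, 𝟙 ℓ.unop.obj, isActive_id _, a⟩ =
        (⟨ℓ'.unop.obj, 𝟙 ℓ'.unop.obj, isActive_id _, A.map h a⟩ : Xobj A ℓ'.unop.obj) := by
      rw [Xmap_eq A h.unop.1 (𝟙 ℓ.unop.obj) (isActive_id _) a (𝟙 ℓ'.unop.obj) h.unop.1
        (isActive_id _) h.unop.2 (by simp)]
      exact Xobj_mk_congr A rfl rfl
    exact key.symm

/-- the costructured arrow attached to a map out of `Y.unop` -/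
def mkObj {Y : SimplexCategoryᵒᵖ} {q : SimplexCategory} (α : Y.unop ⟶ q) :
    CostructuredArrow inertInclusion.op Y :=
  CostructuredArrow.mk (Y := DIop q) (α.op : inertInclusion.op.obj (DIop q) ⟶ Y)

/-- the explicit model is a pointwise left Kan extension -/
def XFpointwise :
    (Functor.LeftExtension.mk (XF A) (XFunit A)).IsPointwiseLeftKanExtension := by
  intro Y
  refine
    { desc := fun s => TypeCat.ofHom fun x => s.ι.app (mkObj x.2.1) x.2.2.2
      fac := ?_
      uniq := ?_ }
  · intro s c
    ext a
    have h2 : ((Functor.LeftExtension.mk (XF A) (XFunit A)).coconeAt Y).ι.app c a =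
        (⟨acod c.hom.unop, amap c.hom.unop, amap_active _,
          Amap A (imap c.hom.unop) (imap_inert _) a⟩ : Xobj A Y.unop) :=
      Xmap_eq A c.hom.unop (𝟙 _) (isActive_id _) a (amap c.hom.unop) (imap c.hom.unop)
        (amap_active _) (imap_inert _) (by rw [fact]; simp)
    exact (congrArg (fun x : Xobj A Y.unop => s.ι.app (mkObj x.2.1) x.2.2.2) h2).trans
      (types_congr_hom (s.w (CostructuredArrow.homMk (f := c) (f' := mkObj (amap c.hom.unop))
        (DIhom (imap c.hom.unop) (imap_inert _)).op
        (Quiver.Hom.unop_inj (fact c.hom.unop)))) a)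
  · intro s m hm
    ext x
    obtain ⟨q, α, hα, a⟩ := x
    have h2 : Xmap A α (⟨q, 𝟙 q, isActive_id _, a⟩ : Xobj A q) = ⟨q, α, hα, a⟩ := by
      rw [Xmap_eq A α (𝟙 q) (isActive_id _) a α (𝟙 q) hα (inertProp.id_mem q) (by simp)]
      exact Xobj_mk_congr A rfl (Amap_id A _ a)
    have h3 := types_congr_hom (hm (mkObj α)) a
    exact (congrArg (fun y => m y) h2.symm).trans h3

instance : (XF A).IsLeftKanExtension (XFunit A) :=
  (XFpointwise A).isLeftKanExtension

lemma Xobj_mk_val {n q q' : SimplexCategory} {α : n ⟶ q} {α' : n ⟶ q'}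
    {h : IsActive α} {h' : IsActive α'} {a : A.obj (DIop q)} {a' : A.obj (DIop q')}
    (H : (⟨q, α, h, a⟩ : Xobj A n) = ⟨q', α', h', a'⟩) :
    ∀ i, (α.toOrderHom i : ℕ) = (α'.toOrderHom i : ℕ) := by
  have hq : q = q' := Xobj_mk_fst A H
  subst hq
  intro i
  rw [(Xobj_mk_inj A H).1]

lemma XF_decomposition : IsDecomposition (XF A) := by
  intro n m k p α ι θ φ hα hι hθ hφ hpo
  constructor
  · intro x
    show Xmap A ι (Xmap A φ x) = Xmap A α (Xmap A θ x)
    rw [← Xmap_comp A φ ι x, ← Xmap_comp A θ α x, hpo.w]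
  · intro b c hbc
    obtain ⟨qk, χ, hχ, a1⟩ := b
    obtain ⟨qm, ρ, hρ, a2⟩ := c
    have hR : Xmap A α (⟨qm, ρ, hρ, a2⟩ : Xobj A m) =
        ⟨qm, α ≫ ρ, isActive_comp hα hρ, a2⟩ := by
      rw [Xmap_eq A α ρ hρ a2 (α ≫ ρ) (𝟙 qm) (isActive_comp hα hρ) (inertProp.id_mem qm)
        (by simp)]
      exact Xobj_mk_congr A rfl (Amap_id A _ a2)
    replace hbc : (⟨acod (ι ≫ χ), amap (ι ≫ χ), amap_active _,
        Amap A (imap (ι ≫ χ)) (imap_inert _) a1⟩ : Xobj A n) =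
        ⟨qm, α ≫ ρ, isActive_comp hα hρ, a2⟩ := by
      rw [← hR]; exact hbc
    have hq := Xobj_mk_fst A hbc
    subst hq
    obtain ⟨hmap, ha⟩ := Xobj_mk_inj A hbc
    have hcomm : α ≫ (ρ ≫ imap (ι ≫ χ)) = ι ≫ χ := by
      rw [← Category.assoc, ← hmap, fact]
    obtain ⟨ψ, h1, h2⟩ : ∃ ψ : p ⟶ qk, θ ≫ ψ = ρ ≫ imap (ι ≫ χ) ∧ φ ≫ ψ = χ :=
      ⟨hpo.desc _ _ hcomm, hpo.inl_desc _ _ _, hpo.inr_desc _ _ _⟩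
    have hψ : IsActive ψ := by
      constructor
      · have h := congrArg (fun f : k ⟶ qk => f.toOrderHom 0) h2
        simp only [comp_app] at h
        rw [hφ.1] at h
        rw [h, hχ.1]
      · have h := congrArg (fun f : k ⟶ qk => f.toOrderHom (Fin.last k.len)) h2
        simp only [comp_app] at h
        rw [hφ.2] at h
        rw [h, hχ.2]
    refine ⟨⟨qk, ψ, hψ, a1⟩, ⟨?_, ?_⟩, ?_⟩
    · show Xmap A φ _ = _
      rw [Xmap_eq A φ ψ hψ a1 χ (𝟙 qk) hχ (inertProp.id_mem qk)
        (by rw [Category.comp_id, h2])]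
      exact Xobj_mk_congr A rfl (Amap_id A _ a1)
    · show Xmap A θ _ = _
      rw [Xmap_eq A θ ψ hψ a1 ρ (imap (ι ≫ χ)) hρ (imap_inert _) h1.symm]
      exact Xobj_mk_congr A rfl ha
    · rintro ⟨q', ψ', hψ', a'⟩ ⟨u1, u2⟩
      have hu1 : (⟨q', φ ≫ ψ', isActive_comp hφ hψ', a'⟩ : Xobj A k) = ⟨qk, χ, hχ, a1⟩ := by
        refine Eq.trans ?_ u1
        show _ = Xmap A φ (⟨q', ψ', hψ', a'⟩ : Xobj A p)
        rw [Xmap_eq A φ ψ' hψ' a' (φ ≫ ψ') (𝟙 q') (isActive_comp hφ hψ')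
          (inertProp.id_mem q') (by simp)]
        exact (Xobj_mk_congr A rfl (Amap_id A _ a')).symm
      have hq' : q' = qk := Xobj_mk_fst A hu1
      subst hq'
      obtain ⟨hph, ha'⟩ := Xobj_mk_inj A hu1
      have hu2 : (⟨acod (θ ≫ ψ'), amap (θ ≫ ψ'), amap_active _,
          Amap A (imap (θ ≫ ψ')) (imap_inert _) a'⟩ : Xobj A m) =
          ⟨acod (ι ≫ χ), ρ, hρ, a2⟩ := u2
      have hval := Xobj_mk_val A hu2
      have e1 : α ≫ (θ ≫ ψ') = ι ≫ χ := by
        rw [← hph, ← Category.assoc, ← Category.assoc, hpo.w]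
      have hz0 : ((θ ≫ ψ').toOrderHom 0 : ℕ) = ((ι ≫ χ).toOrderHom 0 : ℕ) := by
        have h := congrArg (fun f : n ⟶ q' => (f.toOrderHom 0 : ℕ)) e1
        rw [comp_app α (θ ≫ ψ') 0, hα.1] at h
        exact h
      have hkey : θ ≫ ψ' = ρ ≫ imap (ι ≫ χ) := by
        apply hom_ext'
        intro i
        have hv := hval i
        rw [amap_val] at hv
        have m1 := f_zero_le (θ ≫ ψ') i
        rw [comp_app ρ (imap (ι ≫ χ)) i, imap_val]
        omega
      have hfin : ψ' = ψ := hpo.hom_ext (by rw [hkey, h1]) (by rw [hph, h2])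
      exact Xobj_mk_congr A hfin ha'

end Model

end FreeDecomp

lemma isPullbackSet_of_equivs {A B C D A' B' C' D' : Type u}
    {f : A → B} {g : A → C} {h : B → D} {k : C → D}
    {f' : A' → B'} {g' : A' → C'} {h' : B' → D'} {k' : C' → D'}
    (eA : A ≃ A') (eB : B ≃ B') (eC : C ≃ C') (eD : D ≃ D')
    (hf : ∀ a, f' (eA a) = eB (f a)) (hg : ∀ a, g' (eA a) = eC (g a))
    (hh : ∀ b, h' (eB b) = eD (h b)) (hk : ∀ c, k' (eC c) = eD (k c))
    (H : IsPullbackSet f' g' h' k') : IsPullbackSet f g h k := by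
  constructor
  · intro a
    apply eD.injective
    rw [← hh, ← hk, ← hf, ← hg]
    exact H.1 (eA a)
  · intro b c hbc
    obtain ⟨a', ⟨hab, hac⟩, huniq⟩ := H.2 (eB b) (eC c) (by rw [hh, hk, hbc])
    refine ⟨eA.symm a', ⟨?_, ?_⟩, ?_⟩
    · apply eB.injective
      rw [← hf]
      simpa using hab
    · apply eC.injective
      rw [← hg]
      simpa using hac
    · intro a ⟨ha1, ha2⟩
      have : eA a = a' := huniq (eA a) ⟨by rw [hf, ha1], by rw [hg, ha2]⟩
      rw [← this]
      simp

lemma isDecomposition_of_iso {X Y : SSet.{u}} (e : X ≅ Y) (hY : IsDecomposition Y) :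
    IsDecomposition X := by
  intro n m k p α ι θ φ hα hι hθ hφ hpo
  refine isPullbackSet_of_equivs (e.app (Opposite.op p)).toEquiv (e.app (Opposite.op k)).toEquiv
    (e.app (Opposite.op m)).toEquiv (e.app (Opposite.op n)).toEquiv
    ?_ ?_ ?_ ?_ (hY α ι θ φ hα hι hθ hφ hpo)
  · intro a; exact (FunctorToTypes.naturality e.hom φ.op a).symm
  · intro a; exact (FunctorToTypes.naturality e.hom θ.op a).symm
  · intro b; exact (FunctorToTypes.naturality e.hom ι.op b).symm
  · intro c; exact (FunctorToTypes.naturality e.hom α.op c).symm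


/-- For every outer face complex `A : Δ_inertᵒᵖ ⥤ Set`, the simplicial set `j_! A`
obtained by left Kan extension along (the opposite of) the inclusion
`j : Δ_inert → Δ` is a decomposition space. -/
theorem freeDecompositionSpace (A : DeltaInertᵒᵖ ⥤ Type u) :
    IsDecomposition (inertInclusion.op.leftKanExtension A) := by
  have e : inertInclusion.op.leftKanExtension A ≅ FreeDecomp.XF A :=
    Functor.leftKanExtensionUnique _ (inertInclusion.op.leftKanExtensionUnit A) _
      (FreeDecomp.XFunit A)
  exact isDecomposition_of_iso e (FreeDecomp.XF_decomposition A)
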